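/- Let h_1, h_2 ∈ ℂ^M with h_1 = τ h_2 for some τ ∈ ℂ with |τ| ≥ 1, h_2 ≠ 0, and P > 0. Then max over w^H w = P of min{|h_1^H w|², |h_2^H w|²} equals P‖h_2‖², attained at w = √P h_2/‖h_2‖. -/

import Mathlib

theorem stmt7 (M : ℕ) (h1 h2 : EuclideanSpace ℂ (Fin M)) (τ : ℂ)
    (hτ : 1 ≤ ‖τ‖) (hdep : h1 = τ • h2) (hh2 : h2 ≠ 0)
    (P : ℝ) (hP : 0 < P) :
    IsGreatest {x : ℝ | ∃ w : EuclideanSpace ℂ (Fin M), ‖w‖ ^ 2 = P ∧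
        x = min (‖(inner ℂ h1 w : ℂ)‖ ^ 2) (‖(inner ℂ h2 w : ℂ)‖ ^ 2)} (P * ‖h2‖ ^ 2) ∧
      min (‖(inner ℂ h1 ((((Real.sqrt P / ‖h2‖ : ℝ) : ℂ)) • h2) : ℂ)‖ ^ 2)
          (‖(inner ℂ h2 ((((Real.sqrt P / ‖h2‖ : ℝ) : ℂ)) • h2) : ℂ)‖ ^ 2)
        = P * ‖h2‖ ^ 2 := by
  have hn2 : (0:ℝ) < ‖h2‖ := norm_pos_iff.mpr hh2
  -- key: min equals ‖inner ℂ h2 w‖^2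
  have hmin : ∀ w : EuclideanSpace ℂ (Fin M),
      min (‖(inner ℂ h1 w : ℂ)‖ ^ 2) (‖(inner ℂ h2 w : ℂ)‖ ^ 2) = ‖(inner ℂ h2 w : ℂ)‖ ^ 2 := by
    intro w
    have h1w : (inner ℂ h1 w : ℂ) = (starRingEnd ℂ τ) * inner ℂ h2 w := by
      rw [hdep, inner_smul_left]
    rw [min_eq_right]
    rw [h1w, norm_mul]
    have ht : (1:ℝ) ≤ ‖(starRingEnd ℂ τ)‖ := by
      rwa [RCLike.norm_conj]
    have ht2 : (1:ℝ) ≤ ‖(starRingEnd ℂ τ)‖ ^ 2 := by nlinarith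
    rw [mul_pow]
    nlinarith [sq_nonneg ‖(inner ℂ h2 w : ℂ)‖]
  set w0 : EuclideanSpace ℂ (Fin M) := (((Real.sqrt P / ‖h2‖ : ℝ) : ℂ)) • h2 with hw0
  have hw0norm : ‖w0‖ ^ 2 = P := by
    rw [hw0, norm_smul, Complex.norm_real]
    rw [Real.norm_eq_abs, abs_of_pos (by positivity),
      div_mul_cancel₀ _ hn2.ne', Real.sq_sqrt hP.le]
  have hinner2 : (inner ℂ h2 w0 : ℂ) = ((Real.sqrt P / ‖h2‖ : ℝ) : ℂ) * (‖h2‖^2 : ℝ) := by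
    rw [hw0, inner_smul_right, inner_self_eq_norm_sq_to_K]
    norm_cast
    simp [Complex.ofReal_mul, RCLike.ofReal_mul]
  have hval : ‖(inner ℂ h2 w0 : ℂ)‖ ^ 2 = P * ‖h2‖ ^ 2 := by
    rw [hinner2, norm_mul, Complex.norm_real, Complex.norm_real,
      Real.norm_eq_abs, Real.norm_eq_abs, abs_of_pos (by positivity),
      abs_of_pos (by positivity)]
    rw [mul_pow, div_pow, Real.sq_sqrt hP.le]
    field_simp
  constructor
  · constructor
    · exact ⟨w0, hw0norm, by rw [hmin, hval]⟩
    · rintro x ⟨w, hw, rfl⟩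
      rw [hmin]
      calc ‖(inner ℂ h2 w : ℂ)‖ ^ 2 ≤ (‖h2‖ * ‖w‖) ^ 2 := by
            have := norm_inner_le_norm (𝕜 := ℂ) h2 w
            nlinarith [norm_nonneg ((inner ℂ h2 w : ℂ))]
        _ = P * ‖h2‖ ^ 2 := by rw [mul_pow, hw]; ring
  · rw [hmin, hval]
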